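/- Let D be a DAG consistent with a tiered ordering τ (every edge u → v satisfies τ(u) ≤ τ(v)), and let π be a path between nodes A and B that contains some node C with τ(C) > τ(A) and τ(C) > τ(B). Then π contains a collider at some node W with τ(W) > max(τ(A), τ(B)). -/

import Mathlib

/-- Adjacency: an edge in either direction. -/
def Adj {V : Type*} (E : V → V → Prop) (u v : V) : Prop := E u v ∨ E v u

/-- A directed graph is acyclic if no node lies on a directed cycle. -/
def Acyclic {V : Type*} (E : V → V → Prop) : Prop := ∀ v, ¬ Relation.TransGen E v v

/-- `Desc E v w` : `w` is a descendant of `v` (including `v` itself). -/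
def Desc {V : Type*} (E : V → V → Prop) (v w : V) : Prop := Relation.ReflTransGen E v w

/-- A path between `u` and `v`: a nonempty list of distinct, consecutively adjacent
nodes starting at `u` and ending at `v`. -/
def IsPath {V : Type*} (E : V → V → Prop) (u v : V) (p : List V) : Prop :=
  p.Nodup ∧ p.Chain' (Adj E) ∧ p.head? = some u ∧ p.getLast? = some v

/-- The node at (interior) position `i` of the path `p` is a collider:
both path edges point into it. -/
def ColliderAt {V : Type*} (E : V → V → Prop) (p : List V) (i : ℕ) : Prop :=
  0 < i ∧ ∃ a w b, p[i-1]? = some a ∧ p[i]? = some w ∧ p[i+1]? = some b ∧ E a w ∧ E b w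

/-- A path is blocked by `S` if it contains an interior non-collider in `S`, or a
collider none of whose descendants (including itself) is in `S`. -/
def Blocked {V : Type*} (E : V → V → Prop) (S : Set V) (p : List V) : Prop :=
  (∃ i w, 0 < i ∧ i + 1 < p.length ∧ p[i]? = some w ∧ ¬ ColliderAt E p i ∧ w ∈ S) ∨
  (∃ i w, ColliderAt E p i ∧ p[i]? = some w ∧ ∀ d, Desc E w d → d ∉ S)

/-- `S` d-separates `u` and `v`: every path between them is blocked by `S`. -/
def DSep {V : Type*} (E : V → V → Prop) (S : Set V) (u v : V) : Prop :=
  ∀ p, IsPath E u v p → Blocked E S p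

/-- On a path between  and  in a DAG consistent with τ, any node in a tier
strictly later than both endpoints forces a collider in a tier strictly later
than both endpoints. -/
theorem collider_in_later_tier {V : Type*} (E : V → V → Prop) (hD : Acyclic E)
    (τ : V → ℕ) (hcons : ∀ u v, E u v → τ u ≤ τ v)
    (A B : V) (p : List V) (hp : IsPath E A B p)
    (C : V) (hCp : C ∈ p) (hCA : τ A < τ C) (hCB : τ B < τ C) :
    ∃ i w, ColliderAt E p i ∧ p[i]? = some w ∧ max (τ A) (τ B) < τ w := by
  obtain ⟨hnd, hch, hhead, hlast⟩ := hp
  have hchain : ∀ i (h : i + 1 < p.length), Adj E (p[i]'(by omega)) (p[i+1]'h) := by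
    replace hch := List.isChain_iff_getElem.mp hch
    exact fun i h => hch i (by omega)
  have hlen : 0 < p.length := by
    rcases p with _ | ⟨x, q⟩
    · simp at hhead
    · simp
  have h0 : p[0]'hlen = A := by
    rw [List.head?_eq_getElem?, List.getElem?_eq_getElem hlen] at hhead
    exact Option.some.inj hhead
  have hLB : p[p.length - 1]'(by omega) = B := by
    rw [List.getLast?_eq_getElem?,
      List.getElem?_eq_getElem (show p.length - 1 < p.length by omega)] at hlast
    exact Option.some.inj hlast
  set M := max (τ A) (τ B) with hM
  have hbound : ∀ j (hj : j < p.length), M < τ (p[j]'hj) → 0 < j ∧ j + 1 < p.length := by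
    intro j hj hτ
    constructor
    · rcases Nat.eq_zero_or_pos j with rfl | h
      · rw [h0] at hτ; simp [hM] at hτ
      · exact h
    · by_contra h
      have hje : j = p.length - 1 := by omega
      subst hje
      rw [hLB] at hτ; simp [hM] at hτ
  have mkcol : ∀ j (hj0 : 0 < j) (hj1 : j + 1 < p.length),
      E (p[j-1]'(by omega)) (p[j]'(by omega)) → E (p[j+1]'hj1) (p[j]'(by omega)) →
      M < τ (p[j]'(by omega)) →
      ∃ i w, ColliderAt E p i ∧ p[i]? = some w ∧ M < τ w := by
    intro j hj0 hj1 h1 h2 hτ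
    refine ⟨j, p[j]'(by omega), ⟨hj0, p[j-1]'(by omega), p[j]'(by omega), p[j+1]'hj1,
      ?_, ?_, ?_, h1, h2⟩, ?_, hτ⟩
    · exact List.getElem?_eq_getElem _
    · exact List.getElem?_eq_getElem _
    · exact List.getElem?_eq_getElem _
    · exact List.getElem?_eq_getElem _
  have right : ∀ m j (hj : j < p.length), p.length - j ≤ m → 0 < j →
      E (p[j-1]'(by omega)) (p[j]'hj) → M < τ (p[j]'hj) →
      ∃ i w, ColliderAt E p i ∧ p[i]? = some w ∧ M < τ w := by
    intro m
    induction m with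
    | zero => intro j hj hle; omega
    | succ m ih =>
      intro j hj hle hj0 hEin hτ
      obtain ⟨_, hj1⟩ := hbound j hj hτ
      rcases hchain j hj1 with hE | hE
      · have hτ' : M < τ (p[j+1]'hj1) := lt_of_lt_of_le hτ (hcons _ _ hE)
        have hE' : E (p[(j+1)-1]'(by omega)) (p[j+1]'hj1) := by
          simpa using hE
        exact ih (j+1) hj1 (by omega) (by omega) hE' hτ'
      · exact mkcol j hj0 hj1 hEin hE hτ
  have left : ∀ m j (hj1 : j + 1 < p.length), j ≤ m →
      E (p[j+1]'hj1) (p[j]'(by omega)) → M < τ (p[j]'(by omega)) →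
      ∃ i w, ColliderAt E p i ∧ p[i]? = some w ∧ M < τ w := by
    intro m
    induction m with
    | zero =>
      intro j hj1 hle hEin hτ
      obtain ⟨hj0, _⟩ := hbound j (by omega) hτ
      omega
    | succ m ih =>
      intro j hj1 hle hEin hτ
      obtain ⟨hj0, _⟩ := hbound j (by omega) hτ
      have hju : j - 1 + 1 = j := by omega
      have hadj := hchain (j-1) (by omega)
      rcases hadj with hE | hE
      · have h1 : E (p[j-1]'(by omega)) (p[j]'(by omega)) := by
          convert hE using 2 <;> omega
        exact mkcol j hj0 hj1 h1 hEin hτ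
      · have h2 : E (p[j]'(by omega)) (p[j-1]'(by omega)) := by
          convert hE using 2 <;> omega
        have hτ' : M < τ (p[j-1]'(by omega)) := lt_of_lt_of_le hτ (hcons _ _ h2)
        have hE' : E (p[(j-1)+1]'(by omega)) (p[j-1]'(by omega)) := by
          convert h2 using 2 <;> omega
        exact ih (j-1) (by omega) (by omega) hE' hτ'
  obtain ⟨k, hk, hkC⟩ := List.mem_iff_getElem.mp hCp
  have hτk : M < τ (p[k]'hk) := by rw [hkC]; simp [hM]; omega
  obtain ⟨hk0, hk1⟩ := hbound k hk hτk
  rcases hchain (k-1) (by omega) with hE | hE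
  · have h1 : E (p[k-1]'(by omega)) (p[k]'hk) := by
      convert hE using 2 <;> omega
    exact right (p.length - k) k hk le_rfl hk0 h1 hτk
  · have h2 : E (p[k]'hk) (p[k-1]'(by omega)) := by
      convert hE using 2 <;> omega
    have hτ' : M < τ (p[k-1]'(by omega)) := lt_of_lt_of_le hτk (hcons _ _ h2)
    have hE' : E (p[(k-1)+1]'(by omega)) (p[k-1]'(by omega)) := by
      convert h2 using 2 <;> omega
    exact left (k-1) (k-1) (by omega) le_rfl hE' hτ'
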